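/- For any continuous map φ: Δ^{M−1} → ℝ^N there exists a sequence of Bézier simplices b^{(i)}: Δ^{M−1} → ℝ^N such that sup_{t ∈ Δ^{M−1}} ‖φ(t) − b^{(i)}(t)‖ → 0 as i → ∞; i.e., Bézier simplices are uniformly dense in continuous maps on the simplex. -/

import Mathlib

/-- The set of multi-indices `d ∈ ℕ^M` with `∑ d m = D`. -/
def multiIdx (M D : ℕ) : Finset (Fin M → ℕ) :=
  (Fintype.piFinset fun _ => Finset.range (D + 1)).filter fun d => ∑ m, d m = D

/-- The Bézier simplex of degree `D` with control points `p`. -/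
noncomputable def bezier (M N D : ℕ) (p : (Fin M → ℕ) → EuclideanSpace ℝ (Fin N))
    (t : Fin M → ℝ) : EuclideanSpace ℝ (Fin N) :=
  ∑ d ∈ multiIdx M D,
    ((Nat.multinomial Finset.univ d : ℝ) * ∏ m, t m ^ d m) • p d

open MvPolynomial in
lemma bezier_key (M D : ℕ) (q : MvPolynomial (Fin M) ℝ) (hD : q.totalDegree ≤ D) :
    ∃ c : (Fin M → ℕ) → ℝ, ∀ x ∈ stdSimplex ℝ (Fin M),
      MvPolynomial.eval x q = ∑ d ∈ multiIdx M D, c d * ∏ m, x m ^ d m := by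
  classical
  set s : MvPolynomial (Fin M) ℝ := ∑ m, X m with hs_def
  set q' : MvPolynomial (Fin M) ℝ :=
    ∑ a ∈ q.support, monomial a (coeff a q) * s ^ (D - a.degree) with hq'_def
  have hs : s.IsHomogeneous 1 := IsHomogeneous.sum _ _ _ fun m _ => isHomogeneous_X _ _
  have hdeg : ∀ a ∈ q.support, (Finsupp.degree a) ≤ D := by
    intro a ha
    refine le_trans ?_ hD
    have := MvPolynomial.le_totalDegree ha
    simpa [Finsupp.degree_apply, Finsupp.sum] using this
  have hq' : q'.IsHomogeneous D := by
    apply IsHomogeneous.sum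
    intro a ha
    have h := (isHomogeneous_monomial (coeff a q) (rfl : a.degree = a.degree)).mul
      (hs.pow (D - a.degree))
    have h2 := hdeg a ha
    convert h using 1
    omega
  refine ⟨fun d => coeff (Finsupp.equivFunOnFinite.symm d) q', fun x hx => ?_⟩
  have hsx : eval x s = 1 := by
    simpa [hs_def] using hx.2
  have h1 : eval x q' = eval x q := by
    rw [hq'_def, map_sum]
    simp only [map_mul, map_pow, hsx, one_pow, mul_one]
    rw [← map_sum, ← as_sum]
  rw [← h1, eval_eq']
  -- now transfer support sum to multiIdx sum
  set e := (Finsupp.equivFunOnFinite : (Fin M →₀ ℕ) ≃ (Fin M → ℕ))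
  set T := (multiIdx M D).image (fun d => e.symm d) with hT
  have hsub : q'.support ⊆ T := by
    intro a ha
    have hdega : a.degree = D := by
      have := hq' (mem_support_iff.mp ha)
      rw [Finsupp.degree_eq_weight_one]; exact this
    have hsum : ∑ m, a m = D := by
      rw [← hdega, Finsupp.degree]
      exact (Finset.sum_subset (Finset.subset_univ _)
        (fun i _ hi => Finsupp.notMem_support_iff.mp hi)).symm
    refine Finset.mem_image.mpr ⟨e a, ?_, Equiv.symm_apply_apply _ _⟩
    refine Finset.mem_filter.mpr ⟨Fintype.mem_piFinset.mpr fun m => ?_, ?_⟩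
    · refine Finset.mem_range.mpr ?_
      have : a m ≤ ∑ m, a m := Finset.single_le_sum (fun i _ => Nat.zero_le _) (Finset.mem_univ m)
      simp only [e, Finsupp.equivFunOnFinite_apply]
      omega
    · simpa [e] using hsum
  rw [Finset.sum_subset hsub (fun a _ hna => by simp [notMem_support_iff.mp hna])]
  rw [hT, Finset.sum_image (fun a _ b _ h => e.symm.injective h)]
  refine Finset.sum_congr rfl fun d _ => ?_
  simp [e]

lemma bezier_apply (M N D : ℕ) (p : (Fin M → ℕ) → EuclideanSpace ℝ (Fin N))
    (t : Fin M → ℝ) (j : Fin N) :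
    bezier M N D p t j =
      ∑ d ∈ multiIdx M D, ((Nat.multinomial Finset.univ d : ℝ) * ∏ m, t m ^ d m) * p d j := by
  unfold bezier
  induction (multiIdx M D) using Finset.induction with
  | empty => rfl
  | insert _ _ h ih => rw [Finset.sum_insert h, Finset.sum_insert h, ← ih]; rfl

open MvPolynomial in
lemma bezier_approx (M N : ℕ) (phi : (Fin M → ℝ) → EuclideanSpace ℝ (Fin N))
    (hphi : ContinuousOn phi (stdSimplex ℝ (Fin M))) (ε : ℝ) (hε : 0 < ε) :
    ∃ D p, ∀ x : stdSimplex ℝ (Fin M), ‖phi x - bezier M N D p x‖ ≤ ε := by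
  classical
  haveI : CompactSpace (stdSimplex ℝ (Fin M)) :=
    isCompact_iff_compactSpace.mp (isCompact_stdSimplex _ _)
  set Δ := stdSimplex ℝ (Fin M)
  let f : Fin M → C(Δ, ℝ) := fun m =>
    ⟨fun x => (x : Fin M → ℝ) m, (continuous_apply m).comp continuous_subtype_val⟩
  let A : Subalgebra ℝ C(Δ, ℝ) := Algebra.adjoin ℝ (Set.range f)
  have hA : A.topologicalClosure = ⊤ := by
    apply ContinuousMap.subalgebra_topologicalClosure_eq_top_of_separatesPoints
    intro x y hxy
    obtain ⟨m, hm⟩ : ∃ m, (x : Fin M → ℝ) m ≠ (y : Fin M → ℝ) m := by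
      by_contra h; push_neg at h; exact hxy (Subtype.ext (funext h))
    exact ⟨f m, ⟨f m, Algebra.subset_adjoin ⟨m, rfl⟩, rfl⟩, hm⟩
  set ε' := ε / (N + 1) with hε'
  have hε'pos : 0 < ε' := by positivity
  -- coordinate functions of phi
  have hcont : ∀ j : Fin N, Continuous fun x : Δ => phi x j := by
    intro j
    exact (continuous_apply j).comp ((PiLp.continuous_ofLp 2 _).comp hphi.restrict)
  -- approximate each coordinate
  have happrox : ∀ j : Fin N, ∃ q : MvPolynomial (Fin M) ℝ,
      ∀ x : Δ, |phi x j - eval (x : Fin M → ℝ) q| ≤ ε' := by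
    intro j
    have hmem : (⟨_, hcont j⟩ : C(Δ, ℝ)) ∈ A.topologicalClosure := hA ▸ Algebra.mem_top
    have hmem' : (⟨_, hcont j⟩ : C(Δ, ℝ)) ∈ closure (A : Set C(Δ, ℝ)) := by
      rw [← Subalgebra.topologicalClosure_coe]; exact hmem
    obtain ⟨g, hgA, hgd⟩ := Metric.mem_closure_iff.mp hmem' ε' hε'pos
    have hrange : A ≤ (aeval f : MvPolynomial (Fin M) ℝ →ₐ[ℝ] C(Δ, ℝ)).range := by
      apply Algebra.adjoin_le
      rintro - ⟨m, rfl⟩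
      exact ⟨MvPolynomial.X m, aeval_X f m⟩
    obtain ⟨q, hq0⟩ := hrange hgA
    have hq : (aeval f) q = g := hq0
    refine ⟨q, fun x => ?_⟩
    have heval : g x = eval (x : Fin M → ℝ) q := by
      rw [← hq]
      have h := comp_aeval_apply (ContinuousMap.evalAlgHom ℝ ℝ x) q (f := f)
      simp only [ContinuousMap.evalAlgHom_apply] at h
      rw [h]
      exact RingHom.congr_fun (coe_aeval_eq_eval (f := fun m => (x : Fin M → ℝ) m)) q
    rw [← heval]
    have := ContinuousMap.dist_apply_le_dist (f := (⟨_, hcont j⟩ : C(Δ, ℝ))) (g := g) x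
    calc |phi x j - g x| = dist ((⟨_, hcont j⟩ : C(Δ, ℝ)) x) (g x) := by
          rw [Real.dist_eq]; rfl
      _ ≤ dist (⟨_, hcont j⟩ : C(Δ, ℝ)) g := this
      _ ≤ ε' := le_of_lt hgd
  choose q hq using happrox
  set D := Finset.univ.sup (fun j => (q j).totalDegree) with hD
  have hkey : ∀ j : Fin N, ∃ c : (Fin M → ℕ) → ℝ, ∀ x ∈ stdSimplex ℝ (Fin M),
      eval x (q j) = ∑ d ∈ multiIdx M D, c d * ∏ m, x m ^ d m :=
    fun j => bezier_key M D (q j) (Finset.le_sup (f := fun j => (q j).totalDegree) (Finset.mem_univ j))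
  choose c hc using hkey
  set P : (Fin M → ℕ) → EuclideanSpace ℝ (Fin N) :=
    fun d => WithLp.toLp 2 (fun j => c j d / (Nat.multinomial Finset.univ d : ℝ)) with hP
  refine ⟨D, P, fun x => ?_⟩
  have hbez : ∀ j : Fin N, bezier M N D P x j
      = eval (x : Fin M → ℝ) (q j) := by
    intro j
    rw [bezier_apply, hc j x x.2]
    refine Finset.sum_congr rfl fun d _ => ?_
    have hmz : (Nat.multinomial Finset.univ d : ℝ) ≠ 0 :=
      Nat.cast_ne_zero.mpr (Nat.multinomial_pos _ _).ne'
    show ((Nat.multinomial Finset.univ d : ℝ) * ∏ m, (x : Fin M → ℝ) m ^ d m) *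
        (c j d / (Nat.multinomial Finset.univ d : ℝ)) = c j d * ∏ m, (x : Fin M → ℝ) m ^ d m
    have h2 : ((Nat.multinomial Finset.univ d : ℝ) * ∏ m, (x : Fin M → ℝ) m ^ d m) *
        (c j d / (Nat.multinomial Finset.univ d : ℝ)) =
        ((Nat.multinomial Finset.univ d : ℝ) / (Nat.multinomial Finset.univ d : ℝ)) *
        (c j d * ∏ m, (x : Fin M → ℝ) m ^ d m) := by ring
    rw [h2, div_self hmz, one_mul]
  -- now the norm bound
  have hcoord : ∀ j : Fin N, |phi x j - bezier M N D P x j| ≤ ε' := by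
    intro j; rw [hbez j]; exact hq j x
  have : ‖phi x - bezier M N D P x‖ ≤ Real.sqrt (N * ε' ^ 2) := by
    rw [EuclideanSpace.norm_eq]
    apply Real.sqrt_le_sqrt
    calc ∑ j, ‖(phi x - bezier M N D P x) j‖ ^ 2 ≤ ∑ j : Fin N, ε' ^ 2 := by
          refine Finset.sum_le_sum fun j _ => ?_
          have h1 : ‖(phi x - bezier M N D P x) j‖ = |phi x j - bezier M N D P x j| := rfl
          rw [h1]
          exact pow_le_pow_left₀ (abs_nonneg _) (hcoord j) 2
      _ = N * ε' ^ 2 := by simp [mul_comm]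
  refine this.trans ?_
  rw [Real.sqrt_mul (by positivity), Real.sqrt_sq hε'pos.le]
  calc Real.sqrt N * ε' ≤ (N + 1) * ε' := by
        apply mul_le_mul_of_nonneg_right _ hε'pos.le
        calc Real.sqrt N ≤ Real.sqrt ((N+1)^2) := Real.sqrt_le_sqrt (by nlinarith [Nat.cast_nonneg (α := ℝ) N])
          _ = N + 1 := Real.sqrt_sq (by positivity)
    _ = ε := by rw [hε']; field_simp


/-- Bézier simplices are uniformly dense in continuous maps on the standard simplex. -/
theorem bezier_uniformly_dense (M N : ℕ)
    (phi : (Fin M → ℝ) → EuclideanSpace ℝ (Fin N))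
    (hphi : ContinuousOn phi (stdSimplex ℝ (Fin M))) :
    ∃ (D : ℕ → ℕ) (p : (i : ℕ) → (Fin M → ℕ) → EuclideanSpace ℝ (Fin N)),
      Filter.Tendsto
        (fun i => ⨆ t : stdSimplex ℝ (Fin M), ‖phi t - bezier M N (D i) (p i) t‖)
        Filter.atTop (nhds 0) := by
  have h : ∀ i : ℕ, ∃ D p, ∀ x : stdSimplex ℝ (Fin M),
      ‖phi x - bezier M N D p x‖ ≤ 1 / (i + 1) :=
    fun i => bezier_approx M N phi hphi (1 / (i + 1)) (by positivity)
  choose D p hp using h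
  refine ⟨D, p, ?_⟩
  apply squeeze_zero (g := fun i : ℕ => 1 / ((i : ℝ) + 1))
  · intro i
    exact Real.iSup_nonneg fun t => norm_nonneg _
  · intro i
    exact Real.iSup_le (fun t => hp i t) (by positivity)
  · exact tendsto_one_div_add_atTop_nhds_zero_nat
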